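/- For any measurable $\phi$ with $0 \le \phi \le 1$ and $\int_X \phi\,d\mu = a$, and any measurable set $D$ with $\mu(D) = a$ satisfying $\{f < s\} \subset D \subset \{f \le s\}$ for some $s \ge 0$, one has $\int_D f\,d\mu \le \int_X \phi f\,d\mu$. -/

import Mathlib

open MeasureTheory

/-- inequality half of the bathtub principle: for any measurable `φ`
with `0 ≤ φ ≤ 1` and `∫ φ dμ = a`, and any measurable `D` with `μ(D) = a` and
`{f < s} ⊆ D ⊆ {f ≤ s}` for some `s ≥ 0`, one has `∫_D f dμ ≤ ∫ φ f dμ`. -/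
theorem stmt6 {X : Type*} [MeasurableSpace X] (μ : Measure X) [IsFiniteMeasure μ]
    (f : X → ℝ) (hfmeas : Measurable f) (hf0 : ∀ x, 0 ≤ f x) (hfint : Integrable f μ)
    (a : ℝ) (ha0 : 0 ≤ a) (ha : ENNReal.ofReal a ≤ μ Set.univ)
    (s : ℝ) (hs : 0 ≤ s)
    (φ : X → ℝ) (hφmeas : Measurable φ) (hφ0 : ∀ x, 0 ≤ φ x) (hφ1 : ∀ x, φ x ≤ 1)
    (hφint : (∫ x, φ x ∂μ) = a)
    (D : Set X) (hDmeas : MeasurableSet D) (hDa : μ D = ENNReal.ofReal a)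
    (hD1 : {x | f x < s} ⊆ D) (hD2 : D ⊆ {x | f x ≤ s}) :
    (∫ x in D, f x ∂μ) ≤ ∫ x, φ x * f x ∂μ := by
  set ind : X → ℝ := D.indicator (fun _ => 1) with hind
  have hμD : (μ D).toReal = a := by rw [hDa, ENNReal.toReal_ofReal ha0]
  have hφbd : ∃ C, ∀ x, ‖φ x‖ ≤ C :=
    ⟨1, fun x => by rw [Real.norm_eq_abs, abs_of_nonneg (hφ0 x)]; exact hφ1 x⟩
  have hφ : Integrable φ μ := by
    have := (integrable_const (1:ℝ) (μ := μ)).bdd_mul hφmeas.aestronglyMeasurable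
      (Filter.Eventually.of_forall hφbd.choose_spec)
    simpa using this
  have hφf : Integrable (fun x => φ x * f x) μ :=
    hfint.bdd_mul hφmeas.aestronglyMeasurable (Filter.Eventually.of_forall hφbd.choose_spec)
  have hindeq : (fun x => ind x * f x) = D.indicator f := by
    ext x; by_cases hx : x ∈ D <;>
      simp [ind, Set.indicator_of_mem, Set.indicator_of_notMem, hx]
  have hindf : Integrable (fun x => ind x * f x) μ := by
    rw [hindeq]; exact hfint.indicator hDmeas
  have hindint : Integrable ind μ := (integrable_const 1).indicator hDmeas
  have hnn : ∀ x, 0 ≤ (φ x - ind x) * (f x - s) := by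
    intro x
    by_cases hx : x ∈ D
    · have h1 : ind x = 1 := Set.indicator_of_mem hx _
      have h2 : f x ≤ s := hD2 hx
      nlinarith [hφ1 x]
    · have h0 : ind x = 0 := Set.indicator_of_notMem hx _
      have h2 : s ≤ f x := le_of_not_gt (fun h => hx (hD1 h))
      nlinarith [hφ0 x]
  have hexp : ∀ x, (φ x - ind x) * (f x - s)
      = φ x * f x - s * φ x - (ind x * f x - s * ind x) := fun x => by ring
  have key : 0 ≤ ∫ x, (φ x * f x - s * φ x - (ind x * f x - s * ind x)) ∂μ :=
    integral_nonneg fun x => (hexp x) ▸ hnn x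
  rw [integral_sub
      (show Integrable (fun x => φ x * f x - s * φ x) μ from hφf.sub (hφ.const_mul s))
      (show Integrable (fun x => ind x * f x - s * ind x) μ from
        hindf.sub (hindint.const_mul s))] at key
  rw [integral_sub hφf (hφ.const_mul s), integral_sub hindf (hindint.const_mul s),
    integral_const_mul, integral_const_mul, hφint, hindeq, integral_indicator hDmeas] at key
  have hindval : ∫ x, ind x ∂μ = a := by
    rw [hind, integral_indicator_const (1:ℝ) hDmeas, Measure.real, hμD, smul_eq_mul, mul_one]
  rw [hindval] at key
  linarith
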